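/- Let $1\le p<\infty$, $0\le\lambda_1,\lambda_2<n$, $\lambda_1+\lambda_2<n$, and $\varphi(B)=r_B^{\lambda_1}w(B)^{\lambda_2/n}$. Then $L^{\frac{pn}{n-\lambda_1-\lambda_2}}(w^{\frac{n-\lambda_2}{n-\lambda_1-\lambda_2}})$ embeds continuously into $\mathcal M^{p}(\varphi,w)$, with embedding constant depending only on $n$, $\lambda_1$, $\lambda_2$ and $p$ (not on $w$). -/

import Mathlib

open MeasureTheory Metric ENNReal Set

noncomputable section

abbrev En (n : ℕ) := EuclideanSpace ℝ (Fin n)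

/-- Weighted Morrey "norm": sup over all balls of `((φ(B))⁻¹ ∫_B f^p w)^{1/p}`. -/
def morreyNorm (n : ℕ) (p : ℝ) (φ : En n → ℝ → ℝ≥0∞) (w f : En n → ℝ≥0∞) : ℝ≥0∞ :=
  ⨆ (c : En n) (r : ℝ) (_ : 0 < r),
    ((∫⁻ x in ball c r, f x ^ p * w x) / φ c r) ^ (1 / p)

/-- Köthe dual norm of the weighted Morrey space. -/
def kotheNorm (n : ℕ) (p : ℝ) (φ : En n → ℝ → ℝ≥0∞) (w g : En n → ℝ≥0∞) : ℝ≥0∞ :=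
  ⨆ (f : En n → ℝ≥0∞) (_ : morreyNorm n p φ w f ≤ 1), ∫⁻ x, f x * g x

/-- Characteristic function of the ball `B(c,r)`, with values in `ℝ≥0∞`. -/
def chiB {n : ℕ} (c : En n) (r : ℝ) : En n → ℝ≥0∞ := (ball c r).indicator 1

/-- The Morrey parameter function `φ(B) = r_B^{λ₁} w(B)^{λ₂/n}`. -/
def phiKS (n : ℕ) (lam₁ lam₂ : ℝ) (w : En n → ℝ≥0∞) : En n → ℝ → ℝ≥0∞ :=
  fun c r => ENNReal.ofReal (r ^ lam₁) * (∫⁻ x in ball c r, w x) ^ (lam₂ / (n : ℝ))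

/-- the embedding
`L^{pn/(n-λ₁-λ₂)}(w^{(n-λ₂)/(n-λ₁-λ₂)}) ↪ M^p(φ,w)` with `φ(B) = r_B^{λ₁} w(B)^{λ₂/n}`,
with a constant independent of `w`. -/
theorem stmt14 {n : ℕ} (p lam₁ lam₂ : ℝ) (hp : 1 ≤ p)
    (h1 : 0 ≤ lam₁) (h1' : lam₁ < n) (h2 : 0 ≤ lam₂) (h2' : lam₂ < n)
    (hsum : lam₁ + lam₂ < n) :
    ∃ C : ℝ≥0∞, C ≠ ⊤ ∧ ∀ (w f : En n → ℝ≥0∞), Measurable w → Measurable f →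
      morreyNorm n p (phiKS n lam₁ lam₂ w) w f
        ≤ C * (∫⁻ x, f x ^ (p * n / ((n : ℝ) - lam₁ - lam₂)) *
            w x ^ (((n : ℝ) - lam₂) / ((n : ℝ) - lam₁ - lam₂)))
          ^ (((n : ℝ) - lam₁ - lam₂) / (p * n)) := by
  have hN : (0:ℝ) < n := lt_of_le_of_lt h1 h1'
  have hn : 0 < n := by exact_mod_cast hN
  haveI : Nonempty (Fin n) := ⟨⟨0, hn⟩⟩
  set N : ℝ := (n : ℝ) with hNdef
  have hd : (0:ℝ) < N - lam₁ - lam₂ := by simp only [hNdef]; linarith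
  have hp0 : (0:ℝ) < p := lt_of_lt_of_le one_pos hp
  set cn : ℝ≥0∞ := volume (ball (0 : En n) 1) with hcn
  have hcn_ne : cn ≠ ⊤ := measure_ball_lt_top.ne
  refine ⟨cn ^ (lam₁ / (p * N)), ENNReal.rpow_ne_top_of_nonneg (by positivity) hcn_ne, ?_⟩
  intro w f hw hf
  rw [morreyNorm]
  refine iSup_le fun c => iSup_le fun r => iSup_le fun hr => ?_
  set A : ℝ≥0∞ := ∫⁻ x in ball c r, f x ^ (p * N / (N - lam₁ - lam₂)) *
      w x ^ ((N - lam₂) / (N - lam₁ - lam₂)) with hA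
  -- Hölder with three exponents
  have holder : (∫⁻ x in ball c r, f x ^ p * w x)
      ≤ A ^ ((N - lam₁ - lam₂) / N) * (∫⁻ x in ball c r, w x) ^ (lam₂ / N)
        * (volume (ball c r)) ^ (lam₁ / N) := by
    have hpt : ∀ x, f x ^ p * w x
        = (f x ^ (p * N / (N - lam₁ - lam₂)) * w x ^ ((N - lam₂) / (N - lam₁ - lam₂)))
            ^ ((N - lam₁ - lam₂) / N)
          * w x ^ (lam₂ / N) * (1 : ℝ≥0∞) ^ (lam₁ / N) := by
      intro x
      have ea : p * N / (N - lam₁ - lam₂) * ((N - lam₁ - lam₂) / N) = p := by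
        field_simp
      have eb : (N - lam₂) / (N - lam₁ - lam₂) * ((N - lam₁ - lam₂) / N) + lam₂ / N = 1 := by
        field_simp
        ring
      rw [one_rpow, mul_one, ENNReal.mul_rpow_of_nonneg _ _ (by positivity),
        ← ENNReal.rpow_mul, ← ENNReal.rpow_mul, mul_assoc,
        ← ENNReal.rpow_add_of_nonneg _ _ (mul_nonneg (div_nonneg (by linarith) hd.le) (div_nonneg hd.le hN.le)) (div_nonneg h2 hN.le),
        ea, eb, ENNReal.rpow_one]
    have key := ENNReal.lintegral_prod_norm_pow_le (μ := volume.restrict (ball c r))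
        (Finset.univ : Finset (Fin 3))
        (f := ![fun x => f x ^ (p * N / (N - lam₁ - lam₂)) * w x ^ ((N - lam₂) / (N - lam₁ - lam₂)),
                w, fun _ => 1])
        (fun i _ => by
          fin_cases i
          · exact ((hf.pow_const _).mul (hw.pow_const _)).aemeasurable
          · exact hw.aemeasurable
          · exact measurable_const.aemeasurable)
        (p := ![(N - lam₁ - lam₂) / N, lam₂ / N, lam₁ / N])
        (by simp [Fin.sum_univ_three]; field_simp; ring)
        (fun i _ => by fin_cases i <;> simp <;> positivity)
    simp only [Fin.prod_univ_three, Matrix.cons_val_zero, Matrix.cons_val_one, Matrix.head_cons,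
      Matrix.cons_val_two, Matrix.tail_cons] at key
    calc (∫⁻ x in ball c r, f x ^ p * w x)
        = ∫⁻ x in ball c r,
            (f x ^ (p * N / (N - lam₁ - lam₂)) * w x ^ ((N - lam₂) / (N - lam₁ - lam₂)))
              ^ ((N - lam₁ - lam₂) / N) * w x ^ (lam₂ / N) * (1:ℝ≥0∞) ^ (lam₁ / N) := by
          exact lintegral_congr fun x => hpt x
      _ ≤ _ := by
          refine le_trans key ?_
          simp [hA]
  -- compute the volume factor
  have hvol : (volume (ball c r)) ^ (lam₁ / N)
      = ENNReal.ofReal (r ^ lam₁) * cn ^ (lam₁ / N) := by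
    rw [Measure.addHaar_ball _ c hr.le, ENNReal.mul_rpow_of_nonneg _ _ (by positivity),
      finrank_euclideanSpace_fin, ENNReal.ofReal_rpow_of_pos (pow_pos hr n), ← hcn]
    have : ((r ^ n : ℝ)) ^ (lam₁ / N) = r ^ lam₁ := by
      rw [← Real.rpow_natCast r n, ← Real.rpow_mul hr.le]
      congr 1
      field_simp
      rw [hNdef]; ring
    rw [this]
  have hdiv : (∫⁻ x in ball c r, f x ^ p * w x) / phiKS n lam₁ lam₂ w c r
      ≤ cn ^ (lam₁ / N) * A ^ ((N - lam₁ - lam₂) / N) := by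
    refine ENNReal.div_le_of_le_mul ?_
    rw [phiKS]
    calc (∫⁻ x in ball c r, f x ^ p * w x)
        ≤ A ^ ((N - lam₁ - lam₂) / N) * (∫⁻ x in ball c r, w x) ^ (lam₂ / N)
          * (ENNReal.ofReal (r ^ lam₁) * cn ^ (lam₁ / N)) := by rw [← hvol]; exact holder
      _ = cn ^ (lam₁ / N) * A ^ ((N - lam₁ - lam₂) / N) *
          (ENNReal.ofReal (r ^ lam₁) * (∫⁻ x in ball c r, w x) ^ (lam₂ / N)) := by ring
  calc ((∫⁻ x in ball c r, f x ^ p * w x) / phiKS n lam₁ lam₂ w c r) ^ (1 / p)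
      ≤ (cn ^ (lam₁ / N) * A ^ ((N - lam₁ - lam₂) / N)) ^ (1 / p) :=
        ENNReal.rpow_le_rpow hdiv (by positivity)
    _ = cn ^ (lam₁ / (p * N)) * A ^ ((N - lam₁ - lam₂) / (p * N)) := by
        rw [ENNReal.mul_rpow_of_nonneg _ _ (by positivity), ← ENNReal.rpow_mul,
          ← ENNReal.rpow_mul, div_mul_div_comm, mul_one, mul_comm N p,
          div_mul_div_comm, mul_one, mul_comm N p]
    _ ≤ cn ^ (lam₁ / (p * N)) * (∫⁻ x, f x ^ (p * N / (N - lam₁ - lam₂)) *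
            w x ^ ((N - lam₂) / (N - lam₁ - lam₂))) ^ ((N - lam₁ - lam₂) / (p * N)) := by
        gcongr
        exact setLIntegral_le_lintegral _ _
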